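/- Let n ≥ 2 be an integer, let D be a finite set of n points, and let σ : D → [0,1] satisfy (1/n) Σ_{d ∈ D} σ(d) ≥ 1 − ε for some 0 < ε ≤ 1/2. Fix C > 0, 0 < δ < 1/2, and an integer k ≥ (1+C) ln(n) / (2δ²). For each d ∈ D let X₁^d, …, X_k^d be random variables on a common probability space such that for each fixed d the family (X_i^d)_{i=1}^k is independent, each X_i^d takes values in {0,1}, and E[X_i^d] = σ(d). Then with probability at least 1 − n^{−C}, the number of points d ∈ D with (1/k) Σ_{i=1}^k X_i^d ≤ 1/2 is at most n · ε/(1/2 − δ). -/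

import Mathlib

open MeasureTheory ProbabilityTheory Real
open scoped ENNReal


lemma hoeff_pos {p : ℝ} (hp0 : 0 ≤ p) (hp1 : p ≤ 1) (s : ℝ) :
    0 < 1 - p + p * exp (-s) := by
  rcases eq_or_lt_of_le hp0 with h | h
  · simp [← h]
  · have := exp_pos (-s); nlinarith

lemma hoeff_hasDerivAt_A (p : ℝ) (s : ℝ) :
    HasDerivAt (fun x => 1 - p + p * exp (-x)) (-(p * exp (-s))) s := by
  have h : HasDerivAt (fun x : ℝ => exp (-x)) (-exp (-s)) s := by
    simpa using ((hasDerivAt_id s).neg.exp)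
  have := (h.const_mul p).const_add (1 - p)
  exact this.congr_deriv (by ring)

lemma hoeff_hasDerivAt_phi (p : ℝ) (hp0 : 0 ≤ p) (hp1 : p ≤ 1) (s : ℝ) :
    HasDerivAt (fun x => Real.log (1 - p + p * exp (-x)) + x * p)
      (-(p * exp (-s)) / (1 - p + p * exp (-s)) + p) s := by
  have hA := hoeff_pos hp0 hp1 s
  have h1 := (hoeff_hasDerivAt_A p s).log hA.ne'
  have h2 := h1.add ((hasDerivAt_id s).mul_const p)
  simp only [one_mul] at h2
  exact h2

lemma hoeff_hasDerivAt_phi' (p : ℝ) (hp0 : 0 ≤ p) (hp1 : p ≤ 1) (s : ℝ) :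
    HasDerivAt (fun x => -(p * exp (-x)) / (1 - p + p * exp (-x)) + p)
      ((p * exp (-s) * (1 - p + p * exp (-s)) - (p * exp (-s)) * (p * exp (-s))) /
        (1 - p + p * exp (-s)) ^ 2) s := by
  have hA := hoeff_pos hp0 hp1 s
  have hN : HasDerivAt (fun x => -(p * exp (-x))) (p * exp (-s)) s := by
    have := (hoeff_hasDerivAt_A p s)
    -- derivative of -(p exp(-x)) : use neg of (p * exp(-x))
    have h : HasDerivAt (fun x : ℝ => p * exp (-x)) (-(p * exp (-s))) s := by
      have h' : HasDerivAt (fun x : ℝ => exp (-x)) (-exp (-s)) s := by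
        simpa using ((hasDerivAt_id s).neg.exp)
      exact (h'.const_mul p).congr_deriv (by ring)
    have h2 := h.neg
    simp only [neg_neg] at h2
    exact h2
  have hdiv := hN.div (hoeff_hasDerivAt_A p s) hA.ne'
  have := hdiv.add_const p
  exact this.congr_deriv (by ring)

-- step 1 : phi' s ≤ s/4 for s ≥ 0
lemma hoeff_phi'_le (p : ℝ) (hp0 : 0 ≤ p) (hp1 : p ≤ 1) {s : ℝ} (hs : 0 ≤ s) :
    -(p * exp (-s)) / (1 - p + p * exp (-s)) + p ≤ s / 4 := by
  set F : ℝ → ℝ := fun x => x / 4 - (-(p * exp (-x)) / (1 - p + p * exp (-x)) + p) with hF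
  have hder : ∀ x : ℝ, HasDerivAt F
      (1/4 - (p * exp (-x) * (1 - p + p * exp (-x)) - (p * exp (-x)) * (p * exp (-x))) /
        (1 - p + p * exp (-x)) ^ 2) x := by
    intro x
    have h1 : HasDerivAt (fun y : ℝ => y / 4) (1/4) x := by
      simpa using (hasDerivAt_id x).div_const 4
    exact h1.sub (hoeff_hasDerivAt_phi' p hp0 hp1 x)
  have hmono : Monotone F := by
    apply monotone_of_deriv_nonneg (fun x => (hder x).differentiableAt)
    intro x
    rw [(hder x).deriv]
    have hA := hoeff_pos hp0 hp1 x
    have ha : 0 ≤ p * exp (-x) := mul_nonneg hp0 (exp_pos _).le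
    have key : (p * exp (-x) * (1 - p + p * exp (-x)) - (p * exp (-x)) * (p * exp (-x))) /
        (1 - p + p * exp (-x)) ^ 2 ≤ 1/4 := by
      rw [div_le_iff₀ (by positivity)]
      nlinarith [sq_nonneg (1 - p + p * exp (-x) - 2 * (p * exp (-x)))]
    linarith
  have h0 : F 0 = 0 := by
    simp only [hF, neg_zero, exp_zero]
    norm_num
  have := hmono hs
  rw [h0] at this
  simp only [hF] at this
  linarith

-- step 2 : log ineq
lemma hoeff_log_le (p : ℝ) (hp0 : 0 ≤ p) (hp1 : p ≤ 1) {s : ℝ} (hs : 0 ≤ s) :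
    Real.log (1 - p + p * exp (-s)) + s * p ≤ s ^ 2 / 8 := by
  set G : ℝ → ℝ := fun x => x ^ 2 / 8 - (Real.log (1 - p + p * exp (-x)) + x * p) with hG
  have hder : ∀ x : ℝ, HasDerivAt G
      (x / 4 - (-(p * exp (-x)) / (1 - p + p * exp (-x)) + p)) x := by
    intro x
    have h1 : HasDerivAt (fun y : ℝ => y ^ 2 / 8) (x / 4) x := by
      have := (hasDerivAt_pow 2 x).div_const 8
      exact this.congr_deriv (by ring)
    exact h1.sub (hoeff_hasDerivAt_phi p hp0 hp1 x)
  have hmono : MonotoneOn G (Set.Ici (0:ℝ)) := by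
    apply monotoneOn_of_deriv_nonneg (convex_Ici 0)
      (fun x _ => (hder x).differentiableAt.continuousAt.continuousWithinAt)
      (fun x _ => (hder x).differentiableAt.differentiableWithinAt)
    intro x hx
    rw [interior_Ici] at hx
    rw [(hder x).deriv]
    have := hoeff_phi'_le p hp0 hp1 (le_of_lt hx)
    linarith
  have h0 : G 0 = 0 := by
    simp only [hG, neg_zero, exp_zero]
    norm_num
  have := hmono Set.self_mem_Ici (Set.mem_Ici.2 hs) hs
  rw [h0] at this
  simp only [hG] at this
  linarith

lemma hoeff_key (p : ℝ) (hp0 : 0 ≤ p) (hp1 : p ≤ 1) {s : ℝ} (hs : 0 ≤ s) :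
    1 - p + p * exp (-s) ≤ exp (s ^ 2 / 8 - s * p) := by
  have hA := hoeff_pos hp0 hp1 s
  have := hoeff_log_le p hp0 hp1 hs
  calc 1 - p + p * exp (-s) = exp (Real.log (1 - p + p * exp (-s))) := (exp_log hA).symm
    _ ≤ exp (s ^ 2 / 8 - s * p) := exp_le_exp.2 (by linarith)


lemma bernoulli_tail {Ω : Type*} [MeasurableSpace Ω] (μ : Measure Ω) [IsProbabilityMeasure μ]
    (k : ℕ) (Y : Fin k → Ω → ℝ) (hmeas : ∀ i, Measurable (Y i))
    (hindep : iIndepFun Y μ)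
    (hrange : ∀ i, ∀ ω, Y i ω = 0 ∨ Y i ω = 1)
    (p : ℝ) (hmean : ∀ i, ∫ ω, Y i ω ∂μ = p) (hp1 : p ≤ 1)
    (δ : ℝ) (hδ0 : 0 < δ) (hp : 1/2 + δ ≤ p) :
    μ {ω | (∑ i, Y i) ω ≤ (k:ℝ)/2} ≤ ENNReal.ofReal (exp (-(2*δ^2*k))) := by
  have hp0 : 0 ≤ p := by linarith
  set t : ℝ := -(4*δ) with ht
  have ht0 : t ≤ 0 := by simp [ht]; positivity
  -- integrability of exp (t * Y i)
  have hint : ∀ i, Integrable (fun ω => exp (t * Y i ω)) μ := by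
    intro i
    refine (integrable_const (1:ℝ)).mono' (((hmeas i).const_mul t).exp.aestronglyMeasurable) ?_
    refine Filter.Eventually.of_forall fun ω => ?_
    rcases hrange i ω with h | h <;> rw [h] <;> simp [Real.abs_exp, Real.exp_le_one_iff] <;> nlinarith
  -- mgf of a single variable
  have hmgf1 : ∀ i, mgf (Y i) μ t = 1 - p + p * exp t := by
    intro i
    have hYint : Integrable (Y i) μ := by
      refine (integrable_const (1:ℝ)).mono' (hmeas i).aestronglyMeasurable ?_
      refine Filter.Eventually.of_forall fun ω => ?_
      rcases hrange i ω with h | h <;> rw [h] <;> norm_num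
    have heq : (fun ω => exp (t * Y i ω)) = fun ω => 1 + Y i ω * (exp t - 1) := by
      funext ω
      rcases hrange i ω with h | h <;> rw [h] <;> simp <;> ring
    rw [mgf, heq]
    rw [integral_add (integrable_const 1) (hYint.mul_const _)]
    rw [integral_mul_const, integral_const, hmean i]
    simp; ring
  -- integrability of sum
  have hintsum : Integrable (fun ω => exp (t * (∑ i, Y i) ω)) μ :=
    ProbabilityTheory.iIndepFun.integrable_exp_mul_sum hindep hmeas (fun i _ => hint i)
  have hchern := measure_le_le_exp_mul_mgf (X := ∑ i, Y i) (μ := μ) ((k:ℝ)/2) ht0 hintsum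
  rw [iIndepFun.mgf_sum hindep hmeas] at hchern
  have hprod : ∏ i : Fin k, mgf (Y i) μ t = (1 - p + p * exp t) ^ k := by
    simp [hmgf1]
  rw [hprod] at hchern
  -- bound the RHS
  have hs4 : (0:ℝ) ≤ 4*δ := by positivity
  have hkey := hoeff_key p hp0 hp1 hs4
  have hApos : 0 < 1 - p + p * exp (-(4*δ)) := by
    rcases eq_or_lt_of_le hp0 with h | h
    · simp [← h]
    · have := exp_pos (-(4*δ)); nlinarith
  have hpow : (1 - p + p * exp t) ^ k ≤ exp ((4*δ) ^ 2 / 8 - 4*δ*p) ^ k := by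
    apply pow_le_pow_left₀ hApos.le
    simpa [ht] using hkey
  have hbound : exp (-t * ((k:ℝ)/2)) * (1 - p + p * exp t) ^ k ≤ exp (-(2*δ^2*k)) := by
    calc exp (-t * ((k:ℝ)/2)) * (1 - p + p * exp t) ^ k
        ≤ exp (-t * ((k:ℝ)/2)) * exp ((4*δ) ^ 2 / 8 - 4*δ*p) ^ k :=
          mul_le_mul_of_nonneg_left hpow (exp_pos _).le
      _ = exp (-t * ((k:ℝ)/2) + k * ((4*δ) ^ 2 / 8 - 4*δ*p)) := by
          rw [← exp_nat_mul, ← exp_add]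
      _ ≤ exp (-(2*δ^2*k)) := by
          apply exp_le_exp.2
          have hk0 : (0:ℝ) ≤ k := Nat.cast_nonneg k
          have : (4*δ) ^ 2 / 8 - 4*δ*p ≤ -2*δ - 2*δ^2 := by nlinarith
          nlinarith
  have hfin : μ {ω | (∑ i, Y i) ω ≤ (k:ℝ)/2} ≠ ⊤ := measure_ne_top μ _
  rw [ENNReal.le_ofReal_iff_toReal_le hfin (exp_pos _).le]
  exact hchern.trans hbound

open Classical in
/-- empirical error bound for majority voting: if the average goodness of
the `n` points of `D` is at least `1 - ε`, and for each `d` the indicators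
`X d 1, …, X d k` are independent `{0,1}`-valued with mean `σ d`, where
`k ≥ (1+C) ln n / (2δ²)`, then with probability at least `1 - n^(-C)` at most
`n ε/(1/2 - δ)` points have average score at most `1/2`. -/
theorem empirical_error_majority_voting
    {Ω α : Type*} [MeasurableSpace Ω] (μ : Measure Ω) [IsProbabilityMeasure μ]
    (n : ℕ) (hn : 2 ≤ n) (D : Finset α) (hD : D.card = n)
    (σ : α → ℝ) (hσ : ∀ d ∈ D, σ d ∈ Set.Icc (0 : ℝ) 1)
    (ε : ℝ) (hε0 : 0 < ε) (hε : ε ≤ 1 / 2)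
    (havg : (1 / (n : ℝ)) * ∑ d ∈ D, σ d ≥ 1 - ε)
    (C δ : ℝ) (hC : 0 < C) (hδ0 : 0 < δ) (hδ : δ < 1 / 2)
    (k : ℕ) (hk : (1 + C) * Real.log n / (2 * δ ^ 2) ≤ (k : ℝ))
    (X : α → Fin k → Ω → ℝ)
    (hmeas : ∀ d ∈ D, ∀ i, Measurable (X d i))
    (hindep : ∀ d ∈ D, iIndepFun (X d) μ)
    (hrange : ∀ d ∈ D, ∀ i, ∀ ω, X d i ω = 0 ∨ X d i ω = 1)
    (hmean : ∀ d ∈ D, ∀ i, ∫ ω, X d i ω ∂μ = σ d) :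
    μ {ω | ((D.filter fun d => (1 / (k : ℝ)) * ∑ i, X d i ω ≤ 1 / 2).card : ℝ) ≤
        (n : ℝ) * ε / (1 / 2 - δ)} ≥
      1 - ENNReal.ofReal ((n : ℝ) ^ (-C)) := by
  have hn0 : (0:ℝ) < n := by positivity
  have hn1 : (1:ℝ) < n := by exact_mod_cast hn.trans_lt' one_lt_two
  have hlogn : 0 < Real.log n := Real.log_pos hn1
  have hk0 : 0 < (k:ℝ) := lt_of_lt_of_le (by positivity) hk
  -- the "good" points
  set G : Finset α := D.filter fun d => 1/2 + δ ≤ σ d with hG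
  -- the bad event
  set B : Set Ω := ⋃ d ∈ G, {ω | (∑ i, X d i) ω ≤ (k:ℝ)/2} with hB
  have hmemD : ∀ d ∈ G, d ∈ D := fun d hd => (Finset.mem_filter.1 hd).1
  have hBmeas : MeasurableSet B := by
    refine Set.Finite.measurableSet_biUnion G.finite_toSet fun d hd => ?_
    have hdD : d ∈ D := hmemD d (Finset.mem_coe.1 hd)
    have hM : Measurable (∑ i : Fin k, X d i) := by
      have h := Finset.measurable_sum (Finset.univ : Finset (Fin k))
        (fun i _ => hmeas d hdD i)
      have heq : (∑ i : Fin k, X d i) = fun ω => ∑ i : Fin k, X d i ω := by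
        funext ω; exact Finset.sum_apply ω Finset.univ (X d)
      rw [heq]; exact h
    exact measurableSet_le hM measurable_const
  -- per-point tail bound
  have htail : ∀ d ∈ G, μ {ω | (∑ i, X d i) ω ≤ (k:ℝ)/2} ≤ ENNReal.ofReal (exp (-(2*δ^2*k))) := by
    intro d hd
    have hdD := hmemD d hd
    exact bernoulli_tail μ k (X d) (hmeas d hdD) (hindep d hdD) (hrange d hdD) (σ d)
      (hmean d hdD) (hσ d hdD).2 δ hδ0 (Finset.mem_filter.1 hd).2
  -- union bound
  have hBle : μ B ≤ ENNReal.ofReal ((n:ℝ) ^ (-C)) := by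
    calc μ B ≤ ∑ d ∈ G, μ {ω | (∑ i, X d i) ω ≤ (k:ℝ)/2} := measure_biUnion_finset_le G _
      _ ≤ ∑ _d ∈ G, ENNReal.ofReal (exp (-(2*δ^2*k))) := Finset.sum_le_sum htail
      _ = G.card * ENNReal.ofReal (exp (-(2*δ^2*k))) := by rw [Finset.sum_const, nsmul_eq_mul]
      _ ≤ n * ENNReal.ofReal (exp (-(2*δ^2*k))) := by
          gcongr
          exact_mod_cast (hD ▸ Finset.card_filter_le D _)
      _ = ENNReal.ofReal ((n:ℝ) * exp (-(2*δ^2*k))) := by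
          rw [ENNReal.ofReal_mul (by positivity)]
          congr
          simp [ENNReal.ofReal_natCast]
      _ ≤ ENNReal.ofReal ((n:ℝ) ^ (-C)) := by
          apply ENNReal.ofReal_le_ofReal
          have h1 : exp (-(2*δ^2*k)) ≤ exp (-(1+C) * Real.log n) := by
            apply exp_le_exp.2
            have h2 : (1 + C) * Real.log n ≤ 2 * δ ^ 2 * k := by
              rw [div_le_iff₀ (by positivity)] at hk
              linarith
            linarith
          calc (n:ℝ) * exp (-(2*δ^2*k)) ≤ (n:ℝ) * exp (-(1+C) * Real.log n) := by
                gcongr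
            _ = (n:ℝ) ^ (-C) := by
                have hre : (n:ℝ) ^ (-C) = exp (Real.log n) * exp (-(1+C) * Real.log n) := by
                  rw [← Real.exp_add, Real.rpow_def_of_pos hn0]
                  congr 1; ring
                rw [hre, Real.exp_log hn0]
  -- complement inclusion
  have hsub : Bᶜ ⊆ {ω | ((D.filter fun d => (1 / (k : ℝ)) * ∑ i, X d i ω ≤ 1 / 2).card : ℝ) ≤
      (n : ℝ) * ε / (1 / 2 - δ)} := by
    intro ω hω
    simp only [hB, Set.compl_iUnion, Set.mem_iInter, Set.mem_compl_iff, Set.mem_setOf_eq] at hω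
    simp only [Set.mem_setOf_eq]
    have hsubset : (D.filter fun d => (1 / (k : ℝ)) * ∑ i, X d i ω ≤ 1 / 2) ⊆ D \ G := by
      intro d hd
      rcases Finset.mem_filter.1 hd with ⟨hdD, hdle⟩
      rw [Finset.mem_sdiff]
      refine ⟨hdD, fun hdG => hω d hdG ?_⟩
      rw [Finset.sum_apply]
      rw [div_mul_eq_mul_div, one_mul, div_le_div_iff₀ hk0 two_pos] at hdle
      linarith
    have hcard1 : ((D.filter fun d => (1 / (k : ℝ)) * ∑ i, X d i ω ≤ 1 / 2).card : ℝ)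
        ≤ ((D \ G).card : ℝ) := by exact_mod_cast Finset.card_le_card hsubset
    -- bound card of D \ G
    have h1 : ((D \ G).card : ℝ) * (1/2 - δ) ≤ ∑ d ∈ D \ G, (1 - σ d) := by
      have h := Finset.card_nsmul_le_sum (D \ G) (fun d => 1 - σ d) (1/2 - δ) ?_
      · simpa [nsmul_eq_mul] using h
      · intro d hd
        rcases Finset.mem_sdiff.1 hd with ⟨hdD, hdG⟩
        have hlt : ¬ (1/2 + δ ≤ σ d) := fun h' => hdG (Finset.mem_filter.2 ⟨hdD, h'⟩)
        have := not_le.1 hlt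
        linarith
    have h2 : ∑ d ∈ D \ G, (1 - σ d) ≤ ∑ d ∈ D, (1 - σ d) :=
      Finset.sum_le_sum_of_subset_of_nonneg Finset.sdiff_subset
        (fun d hdD _ => by linarith [(hσ d hdD).2])
    have h3 : ∑ d ∈ D, (1 - σ d) ≤ (n:ℝ) * ε := by
      have hsum : (n:ℝ) * (1 - ε) ≤ ∑ d ∈ D, σ d := by
        have h : (1 - ε) ≤ 1/(n:ℝ) * ∑ d ∈ D, σ d := havg
        rw [one_div, inv_mul_eq_div, le_div_iff₀ hn0] at h
        linarith
      rw [Finset.sum_sub_distrib, Finset.sum_const, hD, nsmul_eq_mul, mul_one]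
      linarith
    have hδ2 : (0:ℝ) < 1/2 - δ := by linarith
    have hcard2 : ((D \ G).card : ℝ) ≤ (n:ℝ) * ε / (1/2 - δ) := by
      rw [le_div_iff₀ hδ2]
      linarith
    linarith
  -- conclude
  calc (1:ℝ≥0∞) - ENNReal.ofReal ((n:ℝ) ^ (-C)) ≤ 1 - μ B := tsub_le_tsub_left hBle 1
    _ = μ Bᶜ := (prob_compl_eq_one_sub hBmeas).symm
    _ ≤ _ := measure_mono hsub
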